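/- Boundedness of the convective trilinear form on H¹₀-type fields (inequality (2.1)): Let d ∈ {2,3} and let Ω ⊂ ℝ^d be a bounded open set. There exists a constant C = C(Ω) > 0 such that for all C¹ vector fields u, v, w : ℝ^d → ℝ^d with compact support contained in Ω: |b(u,v,w)| ≤ C·‖∇u‖·‖∇v‖·‖∇w‖. -/

import Mathlib

open MeasureTheory Finset RealInnerProductSpace

noncomputable section

abbrev Euc (d : ℕ) := EuclideanSpace ℝ (Fin d)

def eb {d : ℕ} (i : Fin d) : Euc d := EuclideanSpace.single i 1

def frobInner {d : ℕ} (A B : Euc d →L[ℝ] Euc d) : ℝ :=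
  ∑ i : Fin d, ⟪A (eb i), B (eb i)⟫

def gradNorm {d : ℕ} (φ : Euc d → Euc d) : ℝ :=
  Real.sqrt (∫ x, frobInner (fderiv ℝ φ x) (fderiv ℝ φ x))

def triForm {d : ℕ} (u v w : Euc d → Euc d) : ℝ :=
  ∫ x, ⟪fderiv ℝ v x (u x), w x⟫

lemma frob_eq {d : ℕ} (A : Euc d →L[ℝ] Euc d) :
    frobInner A A = ∑ i : Fin d, ‖A (eb i)‖ ^ 2 := by
  simp only [frobInner, real_inner_self_eq_norm_sq]

lemma frob_nonneg {d : ℕ} (A : Euc d →L[ℝ] Euc d) : 0 ≤ frobInner A A := by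
  rw [frob_eq]; positivity

lemma opNorm_le_sqrt_frob {d : ℕ} (A : Euc d →L[ℝ] Euc d) :
    ‖A‖ ≤ Real.sqrt (frobInner A A) := by
  refine A.opNorm_le_bound (Real.sqrt_nonneg _) (fun x => ?_)
  have hx : ∑ i : Fin d, x i • eb i = x := by
    simpa [eb, EuclideanSpace.basisFun_apply] using
      (EuclideanSpace.basisFun (Fin d) ℝ).sum_repr x
  have hCS : ∑ i : Fin d, |x i| * ‖A (eb i)‖ ≤
      Real.sqrt (∑ i : Fin d, |x i| ^ 2) * Real.sqrt (∑ i : Fin d, ‖A (eb i)‖ ^ 2) := by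
    rw [← Real.sqrt_mul (by positivity)]
    rw [Real.le_sqrt (by positivity)]
    · exact Finset.sum_mul_sq_le_sq_mul_sq _ _ _
    · positivity
  calc ‖A x‖ = ‖∑ i : Fin d, x i • A (eb i)‖ := by
        conv_lhs => rw [← hx]
        simp [map_sum]
    _ ≤ ∑ i : Fin d, ‖x i • A (eb i)‖ := norm_sum_le _ _
    _ = ∑ i : Fin d, |x i| * ‖A (eb i)‖ := by simp [norm_smul]
    _ ≤ Real.sqrt (∑ i : Fin d, |x i| ^ 2) * Real.sqrt (∑ i : Fin d, ‖A (eb i)‖ ^ 2) := hCS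
    _ = Real.sqrt (frobInner A A) * ‖x‖ := by
        rw [frob_eq, EuclideanSpace.norm_eq]
        simp only [Real.norm_eq_abs]
        ring

lemma eLpNorm_fderiv_le {d : ℕ} {φ : Euc d → Euc d} (hφ : ContDiff ℝ 1 φ)
    (h2 : HasCompactSupport φ) :
    eLpNorm (fderiv ℝ φ) 2 volume ≤ ENNReal.ofReal (gradNorm φ) := by
  set F : Euc d → ℝ := fun x => frobInner (fderiv ℝ φ x) (fderiv ℝ φ x) with hFdef
  have hfc : Continuous (fderiv ℝ φ) := hφ.continuous_fderiv one_ne_zero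
  have hFcont : Continuous F := by
    apply continuous_finset_sum
    intro i _
    exact (hfc.clm_apply continuous_const).inner (hfc.clm_apply continuous_const)
  have hFsupp : HasCompactSupport F := by
    apply (h2.fderiv ℝ).mono'
    intro x hx
    by_contra hxt
    have h0 : fderiv ℝ φ x = 0 := image_eq_zero_of_notMem_tsupport hxt
    apply hx
    simp [hFdef, F, h0, frobInner]
  have hFint : Integrable F := hFcont.integrable_of_hasCompactSupport hFsupp
  have hF0 : ∀ x, 0 ≤ F x := fun x => frob_nonneg _
  have key : eLpNorm (fderiv ℝ φ) 2 volume ≤ eLpNorm (fun x => Real.sqrt (F x)) 2 volume := by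
    apply eLpNorm_mono
    intro x
    rw [Real.norm_eq_abs, abs_of_nonneg (Real.sqrt_nonneg _)]
    exact opNorm_le_sqrt_frob _
  refine key.trans ?_
  rw [eLpNorm_eq_lintegral_rpow_enorm_toReal (by norm_num) (by norm_num)]
  simp only [enorm_eq_nnnorm]
  have h1 : ∀ x, (‖Real.sqrt (F x)‖₊ : ENNReal) ^ (2 : ENNReal).toReal
      = ENNReal.ofReal (F x) := by
    intro x
    rw [ENNReal.toReal_ofNat, ← ENNReal.coe_rpow_of_nonneg _ (by norm_num), ENNReal.ofReal]
    congr 1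
    ext
    rw [NNReal.coe_rpow, coe_nnnorm, Real.norm_eq_abs, abs_of_nonneg (Real.sqrt_nonneg _),
      Real.rpow_two, Real.sq_sqrt (hF0 x), Real.coe_toNNReal _ (hF0 x)]
  simp_rw [h1]
  rw [← ofReal_integral_eq_lintegral_ofReal hFint (Filter.Eventually.of_forall hF0)]
  rw [ENNReal.toReal_ofNat, ENNReal.ofReal_rpow_of_nonneg (integral_nonneg hF0) (by norm_num)]
  apply le_of_eq
  congr 1
  rw [gradNorm, Real.sqrt_eq_rpow]

lemma L4_bound (d : ℕ) (hd : d = 2 ∨ d = 3) (Ω : Set (Euc d))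
    (hΩb : Bornology.IsBounded Ω) :
    ∃ K : ENNReal, K ≠ ⊤ ∧ ∀ u : Euc d → Euc d, ContDiff ℝ 1 u →
      HasCompactSupport u → tsupport u ⊆ Ω →
      eLpNorm u 4 volume ≤ K * ENNReal.ofReal (gradNorm u) := by
  have hfr : (Module.finrank ℝ (Euc d)) = d := finrank_euclideanSpace_fin
  set p : NNReal := 12/7 with hp
  set C₁ : NNReal := eLpNormLESNormFDerivOfLeConst (Euc d) volume Ω p 4 with hC₁
  set M : ENNReal := (volume Ω) ^ ((7:ℝ)/12 - 1/2) with hM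
  have hMne : M ≠ ⊤ := by
    apply ENNReal.rpow_ne_top_of_nonneg (by norm_num)
    exact hΩb.measure_lt_top.ne
  refine ⟨C₁ * M, ENNReal.mul_ne_top ENNReal.coe_ne_top hMne, ?_⟩
  intro u hu hcu hsu
  have hsupp : Function.support u ⊆ Ω := (subset_tsupport u).trans hsu
  have h1 : eLpNorm u ((4:NNReal) : ENNReal) volume ≤
      C₁ * eLpNorm (fderiv ℝ u) ((p : NNReal) : ENNReal) volume := by
    apply eLpNorm_le_eLpNorm_fderiv_of_le volume hu hsupp
    · rw [hp, ← NNReal.coe_le_coe]; push_cast; norm_num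
    · rw [hfr]; rcases hd with h | h <;> rw [h, hp, ← NNReal.coe_lt_coe] <;> push_cast <;> norm_num
    · rw [hfr]
      rcases hd with h | h <;> rw [h, hp] <;> push_cast <;> norm_num
    · exact hΩb
  have hsupp' : Function.support (fderiv ℝ u) ⊆ Ω :=
    (support_fderiv_subset ℝ).trans hsu
  have h2 : eLpNorm (fderiv ℝ u) ((p : NNReal) : ENNReal) volume ≤
      eLpNorm (fderiv ℝ u) 2 volume * M := by
    rw [← eLpNorm_restrict_eq_of_support_subset (f := fderiv ℝ u) (by exact hsupp')]
    have hle : eLpNorm (fderiv ℝ u) ((p : NNReal) : ENNReal) (volume.restrict Ω) ≤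
        eLpNorm (fderiv ℝ u) 2 (volume.restrict Ω) *
          (volume.restrict Ω) Set.univ ^ (1 / ((p:ENNReal)).toReal - 1 / (2:ENNReal).toReal) := by
      apply eLpNorm_le_eLpNorm_mul_rpow_measure_univ
      · rw [hp, show (2:ENNReal) = ((2:NNReal):ENNReal) by norm_num, ENNReal.coe_le_coe,
          ← NNReal.coe_le_coe]
        push_cast; norm_num
      · exact ((hu.continuous_fderiv one_ne_zero)).aestronglyMeasurable
    refine hle.trans ?_
    gcongr
    · exact Measure.restrict_le_self
    · apply le_of_eq
      rw [Measure.restrict_apply_univ]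
      congr 1
      rw [hp]
      norm_num [ENNReal.toReal_div]
  calc eLpNorm u 4 volume = eLpNorm u ((4:NNReal) : ENNReal) volume := by norm_num
    _ ≤ C₁ * eLpNorm (fderiv ℝ u) ((p : NNReal) : ENNReal) volume := h1
    _ ≤ C₁ * (eLpNorm (fderiv ℝ u) 2 volume * M) := by gcongr
    _ ≤ C₁ * (ENNReal.ofReal (gradNorm u) * M) := by gcongr; exact eLpNorm_fderiv_le hu hcu
    _ = C₁ * M * ENNReal.ofReal (gradNorm u) := by ring

/-- Boundedness of the convective trilinear form on `H¹₀`-type fields (inequality (2.1)). -/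
theorem triForm_bound
    (d : ℕ) (hd : d = 2 ∨ d = 3)
    (Ω : Set (Euc d)) (hΩo : IsOpen Ω) (hΩb : Bornology.IsBounded Ω) :
    ∃ C > 0, ∀ u v w : Euc d → Euc d,
      ContDiff ℝ 1 u → ContDiff ℝ 1 v → ContDiff ℝ 1 w →
      HasCompactSupport u → HasCompactSupport v → HasCompactSupport w →
      tsupport u ⊆ Ω → tsupport v ⊆ Ω → tsupport w ⊆ Ω →
      |triForm u v w| ≤ C * gradNorm u * gradNorm v * gradNorm w := by
  obtain ⟨K, hKne, hK⟩ := L4_bound d hd Ω hΩb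
  set Kr : ℝ := K.toReal with hKr
  have hKr0 : 0 ≤ Kr := ENNReal.toReal_nonneg
  refine ⟨(Kr + 1) ^ 2, by positivity, ?_⟩
  intro u v w hu hv hw hcu hcv hcw hsu hsv hsw
  have hGu : 0 ≤ gradNorm u := Real.sqrt_nonneg _
  have hGv : 0 ≤ gradNorm v := Real.sqrt_nonneg _
  have hGw : 0 ≤ gradNorm w := Real.sqrt_nonneg _
  set g : Euc d → ℝ := fun x => ⟪fderiv ℝ v x (u x), w x⟫ with hgdef
  have hfv : Continuous (fderiv ℝ v) := hv.continuous_fderiv one_ne_zero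
  have hgc : Continuous g := (hfv.clm_apply hu.continuous).inner hw.continuous
  have hgs : HasCompactSupport g := by
    apply hcw.mono'
    rw [Function.support_subset_iff']
    intro x hx
    have : w x = 0 := image_eq_zero_of_notMem_tsupport hx
    simp [hgdef, this]
  have hgi : Integrable g := hgc.integrable_of_hasCompactSupport hgs
  -- step 1 : |∫ g| ≤ (eLpNorm g 1).toReal
  have step1 : |triForm u v w| ≤ (eLpNorm g 1 volume).toReal := by
    have h1 : |triForm u v w| ≤ ∫ x, ‖g x‖ := by
      rw [triForm, ← Real.norm_eq_abs]
      exact norm_integral_le_integral_norm g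
    have h2 : ENNReal.ofReal (∫ x, ‖g x‖) = eLpNorm g 1 volume := by
      rw [eLpNorm_one_eq_lintegral_enorm]
      exact ofReal_integral_norm_eq_lintegral_enorm hgi
    refine h1.trans ?_
    rw [← h2, ENNReal.toReal_ofReal (integral_nonneg (fun x => norm_nonneg _))]
  -- Hölder chain
  have hcont1 : Continuous fun x => ‖fderiv ℝ v x‖ := hfv.norm
  have hcont2 : Continuous fun x => ‖u x‖ * ‖w x‖ :=
    hu.continuous.norm.mul hw.continuous.norm
  have holder1 : eLpNorm g 1 volume ≤
      eLpNorm (fun x => ‖fderiv ℝ v x‖) 2 volume *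
        eLpNorm (fun x => ‖u x‖ * ‖w x‖) 2 volume := by
    have hmono : eLpNorm g 1 volume ≤
        eLpNorm (fun x => ‖fderiv ℝ v x‖ * (‖u x‖ * ‖w x‖)) 1 volume := by
      apply eLpNorm_mono
      intro x
      rw [Real.norm_eq_abs, Real.norm_eq_abs, hgdef]
      calc |⟪fderiv ℝ v x (u x), w x⟫| ≤ ‖fderiv ℝ v x (u x)‖ * ‖w x‖ :=
            abs_real_inner_le_norm _ _
        _ ≤ (‖fderiv ℝ v x‖ * ‖u x‖) * ‖w x‖ := by
            gcongr; exact (fderiv ℝ v x).le_opNorm _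
        _ ≤ |‖fderiv ℝ v x‖ * (‖u x‖ * ‖w x‖)| := by
            rw [mul_assoc]; exact le_abs_self _
    refine hmono.trans ?_
    haveI : ENNReal.HolderTriple 2 2 1 := ⟨by rw [inv_one]; exact ENNReal.inv_two_add_inv_two⟩
    refine (eLpNorm_le_eLpNorm_mul_eLpNorm_of_nnnorm (p := 2) (q := 2) (r := 1) hcont1.aestronglyMeasurable
      hcont2.aestronglyMeasurable (· * ·) 1 ?_).trans (by simp)
    · exact Filter.Eventually.of_forall (fun x => by rw [one_mul]; exact nnnorm_mul_le _ _)
  have holder2 : eLpNorm (fun x => ‖u x‖ * ‖w x‖) 2 volume ≤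
      eLpNorm u 4 volume * eLpNorm w 4 volume := by
    haveI : ENNReal.HolderTriple 4 4 2 := ⟨by
      rw [← two_mul, show (4:ENNReal) = 2 * 2 by norm_num, ENNReal.mul_inv (by simp) (by simp),
        ← mul_assoc, ENNReal.mul_inv_cancel (by simp) (by simp), one_mul]⟩
    have := eLpNorm_le_eLpNorm_mul_eLpNorm_of_nnnorm (μ := (volume : Measure (Euc d))) (p := 4) (q := 4) (r := 2)
      hu.continuous.norm.aestronglyMeasurable hw.continuous.norm.aestronglyMeasurable (· * ·) 1
      (Filter.Eventually.of_forall (fun x => by rw [one_mul]; exact nnnorm_mul_le _ _))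
    simp only [ENNReal.coe_one, one_mul] at this
    refine this.trans ?_
    rw [eLpNorm_norm, eLpNorm_norm]
  have hv2 : eLpNorm (fun x => ‖fderiv ℝ v x‖) 2 volume ≤ ENNReal.ofReal (gradNorm v) := by
    rw [eLpNorm_norm]
    exact eLpNorm_fderiv_le hv hcv
  have total : eLpNorm g 1 volume ≤
      ENNReal.ofReal (gradNorm v) * ((K * ENNReal.ofReal (gradNorm u)) *
        (K * ENNReal.ofReal (gradNorm w))) := by
    refine holder1.trans ?_
    exact mul_le_mul' hv2
      (holder2.trans (mul_le_mul' (hK u hu hcu hsu) (hK w hw hcw hsw)))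
  refine step1.trans ?_
  have hRne : ENNReal.ofReal (gradNorm v) * ((K * ENNReal.ofReal (gradNorm u)) *
      (K * ENNReal.ofReal (gradNorm w))) ≠ ⊤ := by
    apply ENNReal.mul_ne_top ENNReal.ofReal_ne_top
    apply ENNReal.mul_ne_top <;>
      exact ENNReal.mul_ne_top hKne ENNReal.ofReal_ne_top
  have := ENNReal.toReal_mono hRne total
  refine this.trans ?_
  rw [ENNReal.toReal_mul, ENNReal.toReal_mul, ENNReal.toReal_mul, ENNReal.toReal_mul,
    ENNReal.toReal_ofReal hGv, ENNReal.toReal_ofReal hGu, ENNReal.toReal_ofReal hGw, ← hKr]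
  have hK2 : Kr * Kr ≤ (Kr + 1) ^ 2 := by nlinarith
  calc gradNorm v * (Kr * gradNorm u * (Kr * gradNorm w))
      = (Kr * Kr) * gradNorm u * gradNorm v * gradNorm w := by ring
    _ ≤ (Kr + 1) ^ 2 * gradNorm u * gradNorm v * gradNorm w := by
        gcongr
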